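/- Let d ≥ 2, let (A_i)_{i=1}^{d²} be a COB on ℂ^d, let m_i be the smallest eigenvalue of A_i, and set τ := max_i |m_i|. Then τ is the maximum, over all density matrices ρ on ℂ^d, of the quantity −min_{i} Re(tr(A_i ρ)); that is, −min_i Re(tr(A_i ρ)) ≤ τ for every density matrix ρ, and there exists a density matrix ρ (which can be taken to be a rank-1 projection) achieving equality. Equivalently, τ = (1/d)·N({A_i}), where N({A_i}) is Zhu's negativity of the quasiprobability representation determined by (A_i). -/

import Mathlib

open scoped Matrix

open scoped ComplexOrder

private lemma psd_trace_nonneg {n : Type*} [Fintype n] [DecidableEq n] {M : Matrix n n ℂ}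
    (hM : M.PosSemidef) : 0 ≤ M.trace := by
  rw [Matrix.trace]
  refine Finset.sum_nonneg fun i _ => ?_
  have := hM.diag_nonneg (i := i)
  simpa [dotProduct, Pi.single_apply, apply_ite, mul_ite] using this

private lemma trace_mul_psd_nonneg {n : Type*} [Fintype n] [DecidableEq n] {B C : Matrix n n ℂ}
    (hB : B.PosSemidef) (hC : C.PosSemidef) : 0 ≤ ((B * C).trace).re := by
  obtain ⟨X, rfl⟩ : ∃ X : Matrix n n ℂ, B = Xᴴ * X := by
    open MatrixOrder in
    exact ⟨CFC.sqrt B, by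
      rw [← Matrix.star_eq_conjTranspose, (IsSelfAdjoint.of_nonneg (CFC.sqrt_nonneg B)).star_eq,
        CFC.sqrt_mul_sqrt_self B hB.nonneg]⟩
  have h1 : (Xᴴ * X * C).trace = (X * C * Xᴴ).trace :=
    (Matrix.trace_mul_cycle Xᴴ X C).trans (Matrix.trace_mul_cycle C Xᴴ X)
  have h2 : (0:ℂ) ≤ (X * C * Xᴴ).trace := psd_trace_nonneg (hC.mul_mul_conjTranspose_same X)
  rw [h1]
  exact (Complex.le_def.mp h2).1

private lemma sub_smul_one_posSemidef {n : ℕ} {M : Matrix (Fin n) (Fin n) ℂ}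
    (hM : M.IsHermitian) {c : ℝ} (h : ∀ k, c ≤ hM.eigenvalues k) :
    (M - (c : ℂ) • 1).PosSemidef := by
  have hdiag : (Matrix.diagonal (fun k => ((hM.eigenvalues k - c : ℝ) : ℂ))).PosSemidef :=
    Matrix.posSemidef_diagonal_iff.mpr fun k => by
      rw [Complex.zero_le_real]; linarith [h k]
  have hps := hdiag.mul_mul_conjTranspose_same (hM.eigenvectorUnitary : Matrix (Fin n) (Fin n) ℂ)
  have hU : (hM.eigenvectorUnitary : Matrix (Fin n) (Fin n) ℂ) *
      star (hM.eigenvectorUnitary : Matrix (Fin n) (Fin n) ℂ) = 1 :=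
    Matrix.mem_unitaryGroup_iff.mp (hM.eigenvectorUnitary).2
  have h2 : Matrix.diagonal (fun k => ((hM.eigenvalues k - c : ℝ) : ℂ))
      = Matrix.diagonal (RCLike.ofReal ∘ hM.eigenvalues) - (c : ℂ) • 1 := by
    rw [Matrix.smul_one_eq_diagonal, Matrix.diagonal_sub]
    funext k
    simp
  have key : M - (c : ℂ) • 1 = (hM.eigenvectorUnitary : Matrix (Fin n) (Fin n) ℂ) *
      Matrix.diagonal (fun k => ((hM.eigenvalues k - c : ℝ) : ℂ)) *
      star (hM.eigenvectorUnitary : Matrix (Fin n) (Fin n) ℂ) := by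
    rw [h2, Matrix.mul_sub, Matrix.sub_mul, Matrix.mul_smul, Matrix.mul_one, Matrix.smul_mul,
      hU]
    conv_lhs => rw [hM.spectral_theorem, Unitary.conjStarAlgAut_apply]
  rw [key]
  simpa [Matrix.star_eq_conjTranspose] using hps

private lemma re_trace_ge {d : ℕ} {M ρ : Matrix (Fin d) (Fin d) ℂ} (hM : M.IsHermitian)
    (hρ : ρ.PosSemidef) (hρ1 : ρ.trace = 1) {c : ℝ} (h : ∀ k, c ≤ hM.eigenvalues k) :
    c ≤ ((M * ρ).trace).re := by
  have h1 := trace_mul_psd_nonneg (sub_smul_one_posSemidef hM h) hρ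
  have h2 : (M - (c:ℂ) • 1) * ρ = M * ρ - (c:ℂ) • ρ := by
    rw [Matrix.sub_mul, Matrix.smul_mul, Matrix.one_mul]
  rw [h2, Matrix.trace_sub, Matrix.trace_smul, hρ1, smul_eq_mul, mul_one, Complex.sub_re,
    Complex.ofReal_re] at h1
  linarith

/-- For a COB `(A i)` on `ℂ^d` with smallest eigenvalues `m i`
and `τ := max_i |m i|`, the quantity `-min_i Re tr(A i ρ)` is at most `τ` for
every density matrix `ρ`, equality is attained at some rank-1 density matrix,
and `τ = (1/d) N({A i})` where `N` is Zhu's negativity. -/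
theorem cob_tau_eq_negativity (d : ℕ) (hd : 2 ≤ d)
    (A : Fin (d ^ 2) → Matrix (Fin d) (Fin d) ℂ)
    (hherm : ∀ i, (A i).IsHermitian)
    (horth : ∀ i j, (A i * A j).trace = if i = j then (1 / (d : ℂ)) else 0)
    (hsum : ∑ i, A i = 1)
    (m : Fin (d ^ 2) → ℝ) (hm : ∀ i, m i = ⨅ k, (hherm i).eigenvalues k)
    (τ : ℝ) (hτ : τ = ⨆ i, |m i|)
    (N : ℝ)
    (hN : N = sSup {x : ℝ | ∃ ρ : Matrix (Fin d) (Fin d) ℂ,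
      ρ.PosSemidef ∧ ρ.trace = 1 ∧
      x = d * max 0 (-(⨅ i, ((A i * ρ).trace).re))}) :
    (∀ ρ : Matrix (Fin d) (Fin d) ℂ, ρ.PosSemidef → ρ.trace = 1 →
      -(⨅ i, ((A i * ρ).trace).re) ≤ τ) ∧
    (∃ ρ : Matrix (Fin d) (Fin d) ℂ, ρ.PosSemidef ∧ ρ.trace = 1 ∧
      ρ.rank = 1 ∧ -(⨅ i, ((A i * ρ).trace).re) = τ) ∧
    τ = (1 / d) * N := by
  have hd0 : 0 < d := by omega
  have hdR : (0:ℝ) < d := by exact_mod_cast hd0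
  haveI : Nonempty (Fin d) := ⟨⟨0, hd0⟩⟩
  haveI : Nonempty (Fin (d ^ 2)) := ⟨⟨0, by positivity⟩⟩
  haveI : Nontrivial (Fin (d ^ 2)) := by
    apply Fin.nontrivial_iff_two_le.mpr
    nlinarith
  -- trace of each A i is 1/d
  have htr : ∀ i, (A i).trace = 1 / (d:ℂ) := by
    intro i
    have h1 : A i = A i * ∑ j, A j := by rw [hsum, mul_one]
    calc (A i).trace = (∑ j, A i * A j).trace := by rw [← Finset.mul_sum, ← h1]
      _ = ∑ j, (A i * A j).trace := Matrix.trace_sum _ _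
      _ = 1 / (d:ℂ) := by simp [horth]
  -- m i is a lower bound for the eigenvalues of A i
  have hminle : ∀ i k, m i ≤ (hherm i).eigenvalues k := by
    intro i k
    rw [hm i]
    exact ciInf_le (Finite.bddBelow_range _) k
  -- key claim: if m i > 0 then some m j ≤ -(m i)
  have hkey : ∀ i, 0 < m i → ∃ j, m j ≤ -(m i) := by
    intro i hi
    by_contra hcon
    push_neg at hcon
    obtain ⟨j, hji⟩ := exists_ne i
    have hB : (A i - ((m i : ℝ) : ℂ) • 1).PosSemidef :=
      sub_smul_one_posSemidef (hherm i) (hminle i)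
    have hC : (A j - ((-(m i) : ℝ) : ℂ) • 1).PosSemidef :=
      sub_smul_one_posSemidef (hherm j) (fun k => le_trans (le_of_lt (hcon j)) (hminle j k))
    have h0 := trace_mul_psd_nonneg hB hC
    have hij : (A i * A j).trace = 0 := by
      rw [horth]; simp [Ne.symm hji]
    have e1 : (A i - ((m i : ℝ) : ℂ) • 1) * (A j - ((-(m i) : ℝ) : ℂ) • 1)
        = A i * A j - ((-(m i) : ℝ) : ℂ) • A i - (((m i : ℝ) : ℂ) • A j
          - (((m i : ℝ) : ℂ) * ((-(m i) : ℝ) : ℂ)) • (1 : Matrix (Fin d) (Fin d) ℂ)) := by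
      simp only [Matrix.sub_mul, Matrix.mul_sub, Matrix.smul_mul, Matrix.mul_smul,
        Matrix.one_mul, Matrix.mul_one, smul_smul, smul_sub]
      module
    have e2 : ((A i - ((m i : ℝ) : ℂ) • 1) * (A j - ((-(m i) : ℝ) : ℂ) • 1)).trace
        = ((-(m i ^ 2 * d) : ℝ) : ℂ) := by
      rw [e1]
      simp only [Matrix.trace_sub, Matrix.trace_smul, hij, htr i, htr j, Matrix.trace_one,
        smul_eq_mul, Fintype.card_fin]
      push_cast
      ring
    rw [e2, Complex.ofReal_re] at h0
    have hpos : 0 < m i ^ 2 * (d:ℝ) := by positivity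
    linarith
  -- the minimizer of m
  obtain ⟨i₀, hi₀⟩ := Finset.exists_min_image Finset.univ m Finset.univ_nonempty
  have hi₀' : ∀ j, m i₀ ≤ m j := fun j => hi₀.2 j (Finset.mem_univ j)
  have hmneg : m i₀ ≤ 0 := by
    by_contra hpos
    push_neg at hpos
    obtain ⟨j, hj⟩ := hkey i₀ hpos
    have := hi₀' j
    linarith
  -- τ = -(m i₀)
  have hτ' : τ = -(m i₀) := by
    rw [hτ]
    apply le_antisymm
    · apply ciSup_le
      intro i
      rw [abs_le]
      constructor
      · linarith [hi₀' i]
      · rcases le_or_gt (m i) 0 with h | h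
        · linarith
        · obtain ⟨j, hj⟩ := hkey i h
          have := hi₀' j
          linarith
    · have : |m i₀| = -(m i₀) := abs_of_nonpos hmneg
      rw [← this]
      exact le_ciSup (f := fun i => |m i|) (Finite.bddAbove_range _) i₀
  have hτ0 : 0 ≤ τ := by rw [hτ']; linarith
  -- part 1 bound applied pointwise
  have hbound : ∀ ρ : Matrix (Fin d) (Fin d) ℂ, ρ.PosSemidef → ρ.trace = 1 →
      ∀ i, -τ ≤ ((A i * ρ).trace).re := by
    intro ρ hρ hρ1 i
    apply re_trace_ge (hherm i) hρ hρ1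
    intro k
    rw [hτ', neg_neg]
    exact le_trans (hi₀' i) (hminle i k)
  have part1 : ∀ ρ : Matrix (Fin d) (Fin d) ℂ, ρ.PosSemidef → ρ.trace = 1 →
      -(⨅ i, ((A i * ρ).trace).re) ≤ τ := by
    intro ρ hρ hρ1
    exact neg_le.mpr (le_ciInf (fun i => neg_le.mp (neg_le.mpr (hbound ρ hρ hρ1 i))))
  -- part 2: construct the optimal rank-1 density matrix
  obtain ⟨k₀, hk₀⟩ := Finset.exists_min_image Finset.univ ((hherm i₀).eigenvalues)
    Finset.univ_nonempty
  have heig : (hherm i₀).eigenvalues k₀ = m i₀ := by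
    rw [hm i₀]
    exact le_antisymm (le_ciInf fun k => hk₀.2 k (Finset.mem_univ k))
      (ciInf_le (Finite.bddBelow_range _) k₀)
  set v : Fin d → ℂ := ⇑((hherm i₀).eigenvectorBasis k₀) with hv_def
  have hnorm : ‖(hherm i₀).eigenvectorBasis k₀‖ = 1 :=
    (hherm i₀).eigenvectorBasis.orthonormal.1 k₀
  have hv1 : dotProduct (star v) v = 1 := by
    have hinner : (inner ℂ ((hherm i₀).eigenvectorBasis k₀) ((hherm i₀).eigenvectorBasis k₀) : ℂ)
        = dotProduct (star v) v := dotProduct_comm v (star v)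
    rw [← hinner, inner_self_eq_norm_sq_to_K, hnorm]
    norm_num
  set ρ : Matrix (Fin d) (Fin d) ℂ := Matrix.vecMulVec v (star v) with hρ_def
  have hρeq : ρ = (Matrix.replicateRow (Fin 1) (star v))ᴴ * Matrix.replicateRow (Fin 1) (star v) := by
    rw [Matrix.conjTranspose_replicateRow, star_star]
    exact Matrix.vecMulVec_eq (Fin 1) _ _
  have hρpsd : ρ.PosSemidef := by
    rw [hρeq]; exact Matrix.posSemidef_conjTranspose_mul_self _
  have hρtr : ρ.trace = 1 := by
    rw [← hv1, Matrix.trace]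
    simp only [Matrix.diag_apply, hρ_def, Matrix.vecMulVec_apply, dotProduct,
      Pi.star_apply]
    exact Finset.sum_congr rfl fun k _ => by ring
  have hvne : v ≠ 0 := by
    intro h
    rw [h] at hv1
    simp [dotProduct] at hv1
  have hmulv : ρ *ᵥ v = v := by
    funext k
    have : (ρ *ᵥ v) k = v k * dotProduct (star v) v := by
      simp only [Matrix.mulVec, dotProduct, hρ_def, Matrix.vecMulVec_apply, Pi.star_apply,
        Finset.mul_sum]
      exact Finset.sum_congr rfl fun j _ => by ring
    rw [this, hv1, mul_one]
  have hrank : ρ.rank = 1 := by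
    have hle : ρ.rank ≤ 1 := by
      rw [hρ_def, Matrix.vecMulVec_eq (Fin 1)]
      calc (Matrix.replicateCol (Fin 1) v * Matrix.replicateRow (Fin 1) (star v)).rank
          ≤ (Matrix.replicateCol (Fin 1) v).rank := Matrix.rank_mul_le_left _ _
        _ ≤ Fintype.card (Fin 1) := Matrix.rank_le_card_width _
        _ = 1 := by simp
    have hne : ρ.rank ≠ 0 := by
      intro h0
      have hv_mem : v ∈ LinearMap.range ρ.mulVecLin := ⟨v, by simpa using hmulv⟩
      rw [Matrix.rank, Submodule.finrank_eq_zero] at h0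
      rw [h0] at hv_mem
      exact hvne (by simpa using hv_mem)
    omega
  have hAv : A i₀ *ᵥ v = ((m i₀ : ℝ) : ℂ) • v := by
    have h1 := (hherm i₀).mulVec_eigenvectorBasis k₀
    rw [heig] at h1
    rw [h1]
    funext k
    simp only [Pi.smul_apply, Complex.real_smul, smul_eq_mul]
    rfl
  have htrAρ : (A i₀ * ρ).trace = ((m i₀ : ℝ) : ℂ) := by
    have h2 : (A i₀ * ρ).trace = dotProduct (star v) (A i₀ *ᵥ v) := by
      simp only [Matrix.trace, Matrix.diag_apply, Matrix.mul_apply, hρ_def,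
        Matrix.vecMulVec_apply, dotProduct, Matrix.mulVec, Pi.star_apply, Finset.mul_sum]
      exact Finset.sum_congr rfl fun k _ => Finset.sum_congr rfl fun l _ => by ring
    rw [h2, hAv, dotProduct_smul, hv1, smul_eq_mul, mul_one]
  have hval : -(⨅ i, ((A i * ρ).trace).re) = τ := by
    have hupper : (⨅ i, ((A i * ρ).trace).re) ≤ -τ := by
      have h3 : ((A i₀ * ρ).trace).re = -τ := by
        rw [htrAρ, Complex.ofReal_re, hτ', neg_neg]
      exact h3 ▸ ciInf_le (Finite.bddBelow_range _) i₀
    have hlower : -τ ≤ ⨅ i, ((A i * ρ).trace).re := le_ciInf (hbound ρ hρpsd hρtr)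
    rw [le_antisymm hupper hlower, neg_neg]
  refine ⟨part1, ⟨ρ, hρpsd, hρtr, hrank, hval⟩, ?_⟩
  -- part 3
  have hmemS : (d:ℝ) * τ ∈ {x : ℝ | ∃ ρ : Matrix (Fin d) (Fin d) ℂ,
      ρ.PosSemidef ∧ ρ.trace = 1 ∧ x = d * max 0 (-(⨅ i, ((A i * ρ).trace).re))} := by
    refine ⟨ρ, hρpsd, hρtr, ?_⟩
    rw [hval, max_eq_right hτ0]
  have hub : ∀ x ∈ {x : ℝ | ∃ ρ : Matrix (Fin d) (Fin d) ℂ,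
      ρ.PosSemidef ∧ ρ.trace = 1 ∧ x = d * max 0 (-(⨅ i, ((A i * ρ).trace).re))},
      x ≤ (d:ℝ) * τ := by
    rintro x ⟨ρ', hρ', hρ1', rfl⟩
    have h1 : max 0 (-(⨅ i, ((A i * ρ').trace).re)) ≤ τ :=
      max_le hτ0 (part1 ρ' hρ' hρ1')
    exact mul_le_mul_of_nonneg_left h1 (le_of_lt hdR)
  have hNval : N = (d:ℝ) * τ := by
    rw [hN]
    exact le_antisymm (csSup_le ⟨_, hmemS⟩ hub) (le_csSup ⟨(d:ℝ) * τ, hub⟩ hmemS)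
  rw [hNval]
  field_simp
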